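/- Let F be an infinite field, n ≥ 2, S a set, s_1,...,s_n ∈ S, and let K = F((x_s(t))_{s∈S}, x_{s_1}(t_{1,s_1}),...,x_{s_n}(t_{n,s_n})) be the field of rational functions over F in the components of the vector variables x_s(t), s ∈ S, and x_{s_j}(t_{j,s_j}), j = 1,...,n. Let F̄ = F(([x_{s_1}(t_{1,s_1}),...,x_{s_n}(t_{n,s_n})]^{-1} x_s(t))_{s∈S}) be the subfield of K generated over F by all components of the vectors [x_{s_1}(t_{1,s_1}),...,x_{s_n}(t_{n,s_n})]^{-1} x_s(t), s ∈ S. Then the n² components of the vector variables x_{s_1}(t_{1,s_1}),...,x_{s_n}(t_{n,s_n}) are algebraically independent over F̄. -/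

import Mathlib

open Matrix MvPolynomial Set Function

noncomputable section

/-- The component `x_i` of a vector variable `x` (the pair `(i, c)` meaning component `i` of
the vector variable named `c`), as an element of the rational function field. -/
def Xv {F : Type*} [Field F] {n : ℕ} {C : Type*} (v : Fin n × C) :
    FractionRing (MvPolynomial (Fin n × C) F) :=
  algebraMap (MvPolynomial (Fin n × C) F) _ (MvPolynomial.X v)

namespace Stmt14Aux

variable {F K : Type*} [Field F] [Field K] [Algebra F K]
variable {ι ι' : Type*}

/-- The element `u j` viewed inside the subalgebra generated by the range of `u`. -/
def adjElem (F : Type*) [Field F] [Algebra F K] (u : ι' → K) :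
    ι' → Algebra.adjoin F (Set.range u) :=
  fun j => ⟨u j, Algebra.subset_adjoin (Set.mem_range_self j)⟩

theorem val_comp_aeval_adjElem (u : ι' → K) :
    (Algebra.adjoin F (Set.range u)).val.comp (aeval (adjElem F u)) = aeval u := by
  ext j
  simp [adjElem]

theorem aux_aeval_eq (v : ι → K) (u : ι' → K) (p : MvPolynomial (ι ⊕ ι') F) :
    aeval (Sum.elim v u) p
      = aeval (R := Algebra.adjoin F (Set.range u)) v
          (aeval (Sum.elim X (C ∘ adjElem F u)) p) := by
  have h := MvPolynomial.aeval_sumElim (S := Algebra.adjoin F (Set.range u))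
    p (adjElem F u) v
  have he : Sum.elim v (algebraMap (Algebra.adjoin F (Set.range u)) K ∘ adjElem F u)
      = Sum.elim v u := by
    funext i; cases i <;> rfl
  rwa [he] at h

theorem phi_fact (u : ι' → K) :
    (mapAlgHom (aeval (adjElem F u) : MvPolynomial ι' F →ₐ[F] _)).comp
        (sumAlgEquiv F ι ι').toAlgHom
      = (aeval (Sum.elim X (C ∘ adjElem F u)) :
          MvPolynomial (ι ⊕ ι') F →ₐ[F] MvPolynomial ι (Algebra.adjoin F (Set.range u))) := by
  apply MvPolynomial.algHom_ext
  rintro (i | j) <;>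
    simp [sumAlgEquiv_X_inl, sumAlgEquiv_X_inr]

theorem phi_surjective (u : ι' → K) :
    Surjective (aeval (Sum.elim X (C ∘ adjElem F u)) :
      MvPolynomial (ι ⊕ ι') F →ₐ[F] MvPolynomial ι (Algebra.adjoin F (Set.range u))) := by
  have hsa : Surjective (aeval (adjElem F u) : MvPolynomial ι' F →ₐ[F] _) := by
    intro a
    have ha : (a : K) ∈ (aeval u : MvPolynomial ι' F →ₐ[F] K).range :=
      (le_of_eq (Algebra.adjoin_range_eq_range_aeval F u)) a.2
    obtain ⟨r, hr⟩ := ha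
    refine ⟨r, Subtype.ext ?_⟩
    have h2 := congrArg (fun g => g r) (val_comp_aeval_adjElem (F := F) u)
    simp only [AlgHom.comp_apply, Subalgebra.coe_val] at h2
    have hr' : (aeval u) r = (a : K) := hr
    rw [hr'] at h2
    exact h2
  rw [← phi_fact]
  have h1 : Surjective (mapAlgHom (aeval (adjElem F u) : MvPolynomial ι' F →ₐ[F] _) :
      MvPolynomial ι (MvPolynomial ι' F) →ₐ[F] _) := by
    have := MvPolynomial.map_surjective
      (aeval (adjElem F u) : MvPolynomial ι' F →ₐ[F] _).toRingHom hsa (σ := ι)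
    intro p
    obtain ⟨q, hq⟩ := this p
    exact ⟨q, hq⟩
  exact h1.comp (sumAlgEquiv F ι ι').surjective

theorem phi_injective (u : ι' → K) (hu : AlgebraicIndependent F u) :
    Injective (aeval (Sum.elim X (C ∘ adjElem F u)) :
      MvPolynomial (ι ⊕ ι') F →ₐ[F] MvPolynomial ι (Algebra.adjoin F (Set.range u))) := by
  rw [← phi_fact]
  have hia : Injective (aeval (adjElem F u) : MvPolynomial ι' F →ₐ[F] _) := by
    have h1 : Injective (aeval u : MvPolynomial ι' F →ₐ[F] K) :=
      algebraicIndependent_iff_injective_aeval.1 hu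
    intro p q hpq
    apply h1
    have := congrArg (fun g => g p) (val_comp_aeval_adjElem (F := F) u)
    have h2 := congrArg (fun g => g q) (val_comp_aeval_adjElem (F := F) u)
    simp only [AlgHom.comp_apply, Subalgebra.coe_val] at this h2
    rw [← this, ← h2, hpq]
  have h1 : Injective (mapAlgHom (aeval (adjElem F u) : MvPolynomial ι' F →ₐ[F] _) :
      MvPolynomial ι (MvPolynomial ι' F) →ₐ[F] _) := by
    have := MvPolynomial.map_injective
      (aeval (adjElem F u) : MvPolynomial ι' F →ₐ[F] _).toRingHom hia (σ := ι)
    intro p q h; exact this h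
  exact h1.comp (sumAlgEquiv F ι ι').injective

theorem fwd_adjoin {v : ι → K} {u : ι' → K}
    (h : AlgebraicIndependent F (Sum.elim v u)) :
    AlgebraicIndependent (Algebra.adjoin F (Set.range u)) v := by
  rw [algebraicIndependent_iff] at h ⊢
  intro p hp
  obtain ⟨q, rfl⟩ := phi_surjective (F := F) u (ι := ι) p
  rw [← aux_aeval_eq] at hp
  rw [h q hp, map_zero]

theorem bwd_sum {v : ι → K} {u : ι' → K} (hu : AlgebraicIndependent F u)
    (hA : AlgebraicIndependent (Algebra.adjoin F (Set.range u)) v) :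
    AlgebraicIndependent F (Sum.elim v u) := by
  rw [algebraicIndependent_iff] at hA ⊢
  intro p hp
  rw [aux_aeval_eq] at hp
  have := hA _ hp
  have h0 : (aeval (Sum.elim X (C ∘ adjElem F u)) :
      MvPolynomial (ι ⊕ ι') F →ₐ[F] _) p
      = (aeval (Sum.elim X (C ∘ adjElem F u)) :
      MvPolynomial (ι ⊕ ι') F →ₐ[F] _) 0 := by rw [map_zero]; exact this
  exact phi_injective u hu h0

theorem indep_algebra_adjoin_of_field_adjoin {v : ι → K} {u : ι' → K}
    (hv : AlgebraicIndependent (IntermediateField.adjoin F (Set.range u)) v) :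
    AlgebraicIndependent (Algebra.adjoin F (Set.range u)) v := by
  have hle : Algebra.adjoin F (Set.range u)
      ≤ (IntermediateField.adjoin F (Set.range u)).toSubalgebra :=
    IntermediateField.algebra_adjoin_le_adjoin F _
  letI f : Algebra.adjoin F (Set.range u) →+* IntermediateField.adjoin F (Set.range u) :=
    { toFun := fun a => ⟨a.1, (IntermediateField.mem_toSubalgebra _ _).mp (hle a.2)⟩
      map_one' := rfl
      map_mul' := fun _ _ => rfl
      map_zero' := rfl
      map_add' := fun _ _ => rfl }
  refine AlgebraicIndependent.of_ringHom_of_comp_eq (g := RingHom.id K) (f := f) ?_ ?_ ?_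
  · exact hv
  · intro a b hab
    exact Subtype.ext (congrArg Subtype.val hab :)
  · rfl

theorem exists_ratio {u : ι' → K} (hu : AlgebraicIndependent F u)
    (e : IntermediateField.adjoin F (Set.range u)) :
    ∃ a b : MvPolynomial ι' F, aeval u b ≠ 0 ∧ (e : K) * aeval u b = aeval u a := by
  have hinj : Injective (aeval u : MvPolynomial ι' F →ₐ[F] K) :=
    algebraicIndependent_iff_injective_aeval.1 hu
  obtain ⟨z, hz⟩ := hu.aevalEquivField.surjective e
  obtain ⟨⟨num, den⟩, hmk⟩ := IsLocalization.mk'_surjective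
    (nonZeroDivisors (MvPolynomial ι' F)) z
  dsimp only at hmk
  have hcoe : (e : K) = IsFractionRing.lift hinj z := by
    rw [← hz]; exact hu.aevalEquivField_apply_coe z
  have hspec := IsLocalization.mk'_spec (FractionRing (MvPolynomial ι' F)) num den
  have := congrArg (IsFractionRing.lift hinj) hspec
  rw [_root_.map_mul, IsFractionRing.lift_algebraMap, IsFractionRing.lift_algebraMap, hmk] at this
  refine ⟨num, den, ?_, ?_⟩
  · intro h0
    have hden0 : (den : MvPolynomial ι' F) = 0 := by
      apply hinj
      rw [h0, map_zero]
    exact nonZeroDivisors.ne_zero den.2 hden0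
  · rw [hcoe]; exact this

theorem fwd_field {v : ι → K} {u : ι' → K}
    (h : AlgebraicIndependent F (Sum.elim v u)) :
    AlgebraicIndependent (IntermediateField.adjoin F (Set.range u)) v := by
  have hu : AlgebraicIndependent F u := by
    have h1 := h.comp Sum.inr Sum.inr_injective
    exact h1
  have hA : AlgebraicIndependent (Algebra.adjoin F (Set.range u)) v := fwd_adjoin h
  have hinj : Injective (aeval u : MvPolynomial ι' F →ₐ[F] K) :=
    algebraicIndependent_iff_injective_aeval.1 hu
  set L := IntermediateField.adjoin F (Set.range u) with hL
  set A₀ := Algebra.adjoin F (Set.range u) with hA₀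
  rw [algebraicIndependent_iff]
  intro p hp
  classical
  choose a b hb hab using fun md : (ι →₀ ℕ) => exists_ratio hu (p.coeff md)
  have haevalmem : ∀ r : MvPolynomial ι' F, aeval u r ∈ A₀ := by
    intro r
    have : aeval u r ∈ (aeval u : MvPolynomial ι' F →ₐ[F] K).range := ⟨r, rfl⟩
    exact (le_of_eq (Algebra.adjoin_range_eq_range_aeval F u).symm) this
  set q : MvPolynomial ι A₀ :=
    ∑ md ∈ p.support, monomial md
      (⟨aeval u (a md) * ∏ m' ∈ p.support.erase md, aeval u (b m'),
        mul_mem (haevalmem _) (prod_mem fun _ _ => haevalmem _)⟩ : A₀) with hq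
  have hq0 : aeval (R := A₀) v q = 0 := by
    have h1 : (aeval (R := A₀) v) q
        = ∑ md ∈ p.support,
            (aeval u (a md) * ∏ m' ∈ p.support.erase md, aeval u (b m')) *
              md.prod fun i k => v i ^ k := by
      rw [hq, map_sum]
      refine Finset.sum_congr rfl fun md _ => ?_
      rw [aeval_monomial]
      rfl
    have h4 : aeval (R := L) v p
        = ∑ md ∈ p.support, ((p.coeff md : L) : K) * md.prod fun i k => v i ^ k := by
      conv_lhs => rw [p.as_sum]
      rw [map_sum]
      refine Finset.sum_congr rfl fun md _ => ?_
      rw [aeval_monomial]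
      rfl
    have h2 : (0 : K) = ∑ md ∈ p.support,
        (aeval u (a md) * ∏ m' ∈ p.support.erase md, aeval u (b m')) *
          md.prod fun i k => v i ^ k := by
      have h3 : (∏ md ∈ p.support, aeval u (b md)) * aeval (R := L) v p = 0 := by
        rw [hp, mul_zero]
      rw [h4, Finset.mul_sum] at h3
      rw [← h3]
      refine Finset.sum_congr rfl fun md hmd => ?_
      have hab' : ((p.coeff md : L) : K) * aeval u (b md) = aeval u (a md) := hab md
      rw [← Finset.prod_erase_mul _ _ hmd]
      linear_combination (md.prod fun i k => v i ^ k) *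
        (∏ m' ∈ p.support.erase md, aeval u (b m')) * hab'
    rw [h1, ← h2]
  have hq00 : q = 0 := by
    rw [algebraicIndependent_iff] at hA
    exact hA q hq0
  apply MvPolynomial.ext
  intro md
  rw [coeff_zero]
  by_contra hc
  have hmd : md ∈ p.support := mem_support_iff.mpr hc
  have hcoeffq : ((q.coeff md : A₀) : K)
      = aeval u (a md) * ∏ m' ∈ p.support.erase md, aeval u (b m') := by
    rw [hq, coeff_sum]
    rw [Finset.sum_eq_single md
      (fun m' _ hne => by rw [coeff_monomial, if_neg hne])
      (fun habs => absurd hmd habs)]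
    rw [coeff_monomial, if_pos rfl]
  rw [hq00, coeff_zero] at hcoeffq
  have hprod : (∏ m' ∈ p.support.erase md, aeval u (b m')) ≠ 0 :=
    Finset.prod_ne_zero_iff.mpr fun m' _ => hb m'
  have ha0 : aeval u (a md) = 0 := by
    rcases mul_eq_zero.mp hcoeffq.symm with h0 | h0
    · exact h0
    · exact absurd h0 hprod
  have hcm : ((p.coeff md : L) : K) * aeval u (b md) = 0 := by
    rw [hab md, ha0]
  have : ((p.coeff md : L) : K) = 0 := by
    rcases mul_eq_zero.mp hcm with h0 | h0
    · exact h0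
    · exact absurd h0 (hb md)
  exact hc (by exact_mod_cast this)

end Stmt14Aux
set_option maxHeartbeats 1000000 in
set_option synthInstance.maxHeartbeats 200000 in
/-- Theorem 9, second part: for an infinite field `F` and the field `K` of
rational functions in the vector variables `x_s(t)` (`s ∈ S`, named `Sum.inl s`) and
`x_{s_j}(t_{j,s_j})` (`j = 1,...,n`, named `Sum.inr j`), the `n²` components of the vector
variables `x_{s_1}(t_{1,s_1}),...,x_{s_n}(t_{n,s_n})` are algebraically independent over the
subfield `F̄` generated over `F` by the components of the vectors
`[x_{s_1}(t_{1,s_1}),...,x_{s_n}(t_{n,s_n})]⁻¹ x_s(t)`, `s ∈ S`. -/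
theorem vars_algebraicIndependent_over_Fbar {F : Type*} [Field F] [Infinite F]
    {S : Type*} {n : ℕ} (hn : 2 ≤ n) :
    AlgebraicIndependent
      (IntermediateField.adjoin F
        (Set.range fun p : S × Fin n =>
          (Matrix.of fun i j : Fin n =>
              Xv (F := F) (i, (Sum.inr j : S ⊕ Fin n)))⁻¹.mulVec
            (fun i : Fin n => Xv (F := F) (i, (Sum.inl p.1 : S ⊕ Fin n))) p.2))
      (fun q : Fin n × Fin n => Xv (F := F) (q.1, (Sum.inr q.2 : S ⊕ Fin n))) := by
  classical
  set ι := Fin n × (S ⊕ Fin n) with hι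
  set K := FractionRing (MvPolynomial ι F) with hK
  -- the full family of variables is algebraically independent
  have τ : AlgebraicIndependent F (fun w : ι => Xv (F := F) w) := by
    have h1 := (MvPolynomial.algebraicIndependent_X ι F).map'
      (f := IsScalarTower.toAlgHom F (MvPolynomial ι F) K)
      (IsFractionRing.injective (MvPolynomial ι F) K)
    exact h1
  set m : Fin n × Fin n → K := fun q => Xv (F := F) (q.1, (Sum.inr q.2 : S ⊕ Fin n)) with hm'
  set x : S × Fin n → K := fun p => Xv (F := F) (p.2, (Sum.inl p.1 : S ⊕ Fin n)) with hx'
  have hm : AlgebraicIndependent F m := by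
    have h1 := τ.comp (Prod.map id (Sum.inr : Fin n → S ⊕ Fin n))
      (Function.injective_id.prodMap Sum.inr_injective)
    exact h1
  -- reindexing: the full family is the "sum" of the x-family and the m-family
  have hsum_xm : AlgebraicIndependent F (Sum.elim x m) := by
    let e : (S × Fin n) ⊕ (Fin n × Fin n) ≃ ι :=
      ((Equiv.prodComm S (Fin n)).sumCongr (Equiv.refl (Fin n × Fin n))).trans
        (Equiv.prodSumDistrib (Fin n) S (Fin n)).symm
    have h1 := τ.comp e e.injective
    have h2 : ((fun w : ι => Xv (F := F) w) ∘ e) = Sum.elim x m := by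
      funext i
      rcases i with ⟨s, i⟩ | ⟨i, j⟩ <;>
        simp [e, Equiv.prodSumDistrib, Equiv.sumCongr, Equiv.prodComm] <;> rfl
    rwa [h2] at h1
  set L₀ := IntermediateField.adjoin F (Set.range m) with hL₀
  have hxL : AlgebraicIndependent L₀ x := Stmt14Aux.fwd_field hsum_xm
  set M : Matrix (Fin n) (Fin n) K :=
    Matrix.of fun i j : Fin n => Xv (F := F) (i, (Sum.inr j : S ⊕ Fin n)) with hM
  have hdet : M.det ≠ 0 := by
    have hMX : (aeval (fun q : Fin n × Fin n => M q.1 q.2)).mapMatrix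
        (mvPolynomialX (Fin n) (Fin n) F) = M := mvPolynomialX_mapMatrix_aeval F M
    have hd := congrArg Matrix.det hMX
    rw [← AlgHom.map_det] at hd
    intro h0
    have hinj : Function.Injective
        (aeval (fun q : Fin n × Fin n => M q.1 q.2) : MvPolynomial (Fin n × Fin n) F →ₐ[F] K) :=
      algebraicIndependent_iff_injective_aeval.1 hm
    have : (mvPolynomialX (Fin n) (Fin n) F).det = 0 := by
      apply hinj
      rw [hd, h0, map_zero]
    exact det_mvPolynomialX_ne_zero (Fin n) F this
  set M₀ : Matrix (Fin n) (Fin n) L₀ :=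
    Matrix.of fun i j : Fin n =>
      (⟨M i j, IntermediateField.subset_adjoin F _ ⟨(i, j), rfl⟩⟩ : L₀) with hM₀
  have hmap : (algebraMap L₀ K).mapMatrix M₀ = M := by ext i j; rfl
  have hdet₀ : M₀.det ≠ 0 := by
    intro h0
    apply hdet
    have := RingHom.map_det (algebraMap L₀ K) M₀
    rw [hmap] at this
    rw [← this, h0, map_zero]
  have hdet₀' : IsUnit M₀.det := isUnit_iff_ne_zero.mpr hdet₀
  have hBval : ∀ i j, algebraMap L₀ K (M₀⁻¹ i j) = M⁻¹ i j := by
    intro i j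
    rw [Matrix.inv_def, Matrix.inv_def]
    have hd : algebraMap L₀ K M₀.det = M.det := by
      have := RingHom.map_det (algebraMap L₀ K) M₀
      rw [hmap] at this; exact this
    have hadj : algebraMap L₀ K (M₀.adjugate i j) = M.adjugate i j := by
      have := RingHom.map_adjugate (algebraMap L₀ K) M₀
      rw [hmap] at this
      rw [← this]; rfl
    simp only [Matrix.smul_apply, smul_eq_mul, _root_.map_mul, Ring.inverse_eq_inv']
    rw [map_inv₀, hd, hadj]
    rw [Ring.inverse_eq_inv]
  -- the y family
  set y : S × Fin n → K := fun p : S × Fin n =>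
      (Matrix.of fun i j : Fin n =>
        Xv (F := F) (i, (Sum.inr j : S ⊕ Fin n)))⁻¹.mulVec
        (fun i : Fin n => Xv (F := F) (i, (Sum.inl p.1 : S ⊕ Fin n))) p.2 with hy'
  set T : MvPolynomial (S × Fin n) L₀ →ₐ[L₀] MvPolynomial (S × Fin n) L₀ :=
    aeval (fun p : S × Fin n => ∑ j, C (M₀⁻¹ p.2 j) * X (p.1, j)) with hT
  set T' : MvPolynomial (S × Fin n) L₀ →ₐ[L₀] MvPolynomial (S × Fin n) L₀ :=
    aeval (fun p : S × Fin n => ∑ j, C (M₀ p.2 j) * X (p.1, j)) with hT'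
  have hTT : T'.comp T = AlgHom.id L₀ _ := by
    refine MvPolynomial.algHom_ext fun p => ?_
    simp only [AlgHom.comp_apply, aeval_X, map_sum, _root_.map_mul, aeval_C, AlgHom.id_apply, hT, hT']
    have key : ∀ k : Fin n,
        (∑ j : Fin n, C (M₀⁻¹ p.2 j) * (C (M₀ j k) * X (p.1, k)))
          = C ((M₀⁻¹ * M₀) p.2 k) * (X (p.1, k) : MvPolynomial (S × Fin n) L₀) := by
      intro k
      rw [Matrix.mul_apply, map_sum, Finset.sum_mul]
      exact Finset.sum_congr rfl fun j _ => by rw [C_mul, mul_assoc]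
    simp only [MvPolynomial.algebraMap_eq, Finset.mul_sum]
    rw [Finset.sum_comm]
    refine Eq.trans (Finset.sum_congr rfl fun k _ => key k) ?_
    rw [nonsing_inv_mul _ hdet₀']
    simp [Matrix.one_apply, apply_ite (C (σ := S × Fin n) (R := L₀)), Finset.sum_ite_eq]
  have hTinj : Function.Injective T := by
    intro a b hab
    have h1 := congrArg T' hab
    have h2 : ∀ r, T' (T r) = r := fun r => by
      rw [← AlgHom.comp_apply, hTT]; rfl
    rwa [h2, h2] at h1
  have hcomp : (aeval (R := L₀) x).comp T = aeval (R := L₀) y := by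
    refine MvPolynomial.algHom_ext fun p => ?_
    rw [hT]
    simp only [AlgHom.comp_apply, aeval_X, map_sum, _root_.map_mul, aeval_C, hy',
      Matrix.mulVec, dotProduct, ← hM]
    refine Finset.sum_congr rfl fun j _ => ?_
    rw [hBval]
  have hy : AlgebraicIndependent L₀ y := by
    rw [algebraicIndependent_iff_injective_aeval] at hxL ⊢
    rw [← hcomp]
    exact hxL.comp hTinj
  have hsum_ym : AlgebraicIndependent F (Sum.elim y m) :=
    Stmt14Aux.bwd_sum hm (Stmt14Aux.indep_algebra_adjoin_of_field_adjoin hy)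
  have hsum_my : AlgebraicIndependent F (Sum.elim m y) := by
    have h1 := hsum_ym.comp (Equiv.sumComm (Fin n × Fin n) (S × Fin n))
      (Equiv.sumComm (Fin n × Fin n) (S × Fin n)).injective
    have h2 : (Sum.elim y m ∘ (Equiv.sumComm (Fin n × Fin n) (S × Fin n))) = Sum.elim m y := by
      funext i
      rcases i with ⟨i, j⟩ | ⟨s, i⟩ <;> rfl
    rwa [h2] at h1
  exact Stmt14Aux.fwd_field hsum_my

end
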